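/- For every integer c ≥ 0, the density ρ_c satisfies the tail asymptotic: there exists a constant K_c > 0 such that ρ_c(u) / (u^{2c}·e^{-u²/2}) → K_c as |u| → ∞. -/

import Mathlib

open MeasureTheory Complex Filter

/-- The parabolic cylinder function `D₋c`, via its integral representation for `c > 0`
and by `D₀(z) = e^{-z²/4}` in the limiting case `c = 0`. -/
noncomputable def parabolicD' (c : ℝ) (z : ℂ) : ℂ :=
  if c = 0 then Complex.exp (-z ^ 2 / 4)
  else (Complex.exp (-z ^ 2 / 4) / (Real.Gamma c : ℂ)) *
    ∫ x in Set.Ioi (0 : ℝ), Complex.exp (-z * x - (x : ℂ) ^ 2 / 2) * ((x ^ (c - 1) : ℝ) : ℂ)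

/-- The Askey–Wimp–Kerov density `ρ_c(λ) = 1/(√(2π)·Γ(1+c)·|D₋c(iλ)|²)`. -/
noncomputable def awkDensity' (c : ℝ) (l : ℝ) : ℝ :=
  1 / (Real.sqrt (2 * Real.pi) * Real.Gamma (1 + c)
    * ‖parabolicD' c (Complex.I * l)‖ ^ 2)

open Topology

noncomputable def Fn (n : ℕ) (l : ℝ) : ℂ :=
  ∫ x in Set.Ioi (0:ℝ), (x:ℂ)^n * Complex.exp (-(x:ℂ)^2/2 - Complex.I * l * x)

lemma norm_fgen (n : ℕ) (l x : ℝ) :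
    ‖(x:ℂ)^n * Complex.exp (-(x:ℂ)^2/2 - Complex.I * l * x)‖ = |x|^n * Real.exp (-x^2/2) := by
  rw [norm_mul, norm_pow, Complex.norm_exp, Complex.norm_real, Real.norm_eq_abs]
  congr 1
  simp [Complex.sub_re, Complex.div_re, Complex.mul_re, ← Complex.ofReal_pow]

lemma integrable_bound (n : ℕ) : IntegrableOn (fun x : ℝ => x^n * Real.exp (-x^2/2)) (Set.Ioi 0) := by
  have h := integrableOn_rpow_mul_exp_neg_mul_sq (by norm_num : (0:ℝ) < 1/2) (s := (n:ℝ))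
    (by exact neg_one_lt_zero.trans_le (Nat.cast_nonneg n))
  refine h.congr_fun (fun x _ => ?_) measurableSet_Ioi
  dsimp only
  rw [Real.rpow_natCast]
  ring_nf

lemma integrableFn (n : ℕ) (l : ℝ) :
    IntegrableOn (fun x : ℝ => (x:ℂ)^n * Complex.exp (-(x:ℂ)^2/2 - Complex.I * l * x))
      (Set.Ioi 0) := by
  refine Integrable.mono' (integrable_bound n) ?_ ?_
  · apply Continuous.aestronglyMeasurable
    continuity
  · filter_upwards [ae_restrict_mem measurableSet_Ioi] with x hx
    rw [norm_fgen, abs_of_pos hx]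

lemma Fn_tendsto_zero (n : ℕ) : Tendsto (Fn n) (cocompact ℝ) (𝓝 0) := by
  set f : ℝ → ℂ := Set.indicator (Set.Ioi 0) (fun x => (x:ℂ)^n * Complex.exp (-(x:ℂ)^2/2)) with hf
  have hRL := Real.tendsto_integral_exp_smul_cocompact f
  have hmap : Tendsto (fun l : ℝ => l / (2 * Real.pi)) (cocompact ℝ) (cocompact ℝ) := by
    rw [cocompact_eq_atBot_atTop]
    have hpi : 0 < 2 * Real.pi := by positivity
    refine Tendsto.sup_sup ?_ ?_
    · exact tendsto_id.atBot_div_const hpi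
    · exact tendsto_id.atTop_div_const hpi
  have key : Fn n = (fun w : ℝ => ∫ v : ℝ, Real.fourierChar (-(v * w)) • f v) ∘
      (fun l : ℝ => l / (2 * Real.pi)) := by
    funext l
    simp only [Function.comp_apply, Circle.smul_def, Real.fourierChar_apply]
    rw [hf]
    rw [show (fun v : ℝ => cexp (↑(2 * Real.pi * -(v * (l / (2 * Real.pi)))) * I) •
        (Set.Ioi 0).indicator (fun x : ℝ => (x:ℂ) ^ n * cexp (-(x:ℂ) ^ 2 / 2)) v)
      = fun v : ℝ => (Set.Ioi 0).indicator
          (fun x : ℝ => cexp (↑(2 * Real.pi * -(x * (l / (2 * Real.pi)))) * I) •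
            ((x:ℂ) ^ n * cexp (-(x:ℂ) ^ 2 / 2))) v from
      funext fun v => (Set.indicator_smul_apply (Set.Ioi 0)
        (fun x : ℝ => cexp (↑(2 * Real.pi * -(x * (l / (2 * Real.pi)))) * I))
        (fun x : ℝ => (x:ℂ) ^ n * cexp (-(x:ℂ) ^ 2 / 2)) v).symm]
    rw [integral_indicator measurableSet_Ioi]
    unfold Fn
    refine setIntegral_congr_fun measurableSet_Ioi (fun x hx => ?_)
    have hπ : 2 * Real.pi * -(x * (l / (2 * Real.pi))) = -(x*l) := by
      field_simp
    rw [smul_eq_mul, hπ, mul_left_comm, ← Complex.exp_add]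
    congr 2
    push_cast
    ring
  rw [key]
  exact hRL.comp hmap

lemma tendsto_bound_zero (n : ℕ) :
    Tendsto (fun x : ℝ => |x|^n * Real.exp (-x^2/2)) atTop (𝓝 0) := by
  have ho := rpow_mul_exp_neg_mul_sq_isLittleO_exp_neg (b := 1/2) one_half_pos (n:ℝ)
  have h0 : Tendsto (fun x : ℝ => Real.exp (-(1/2) * x)) atTop (𝓝 0) := by
    have h1 : Tendsto (fun x : ℝ => -(1/2) * x) atTop atBot := by
      have h := tendsto_neg_atTop_atBot.comp (tendsto_id.atTop_div_const (two_pos (α := ℝ)))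
      refine h.congr fun x => ?_
      simp only [Function.comp_apply, id_eq]
      ring
    exact Real.tendsto_exp_atBot.comp h1
  have h2 := ho.isBigO.trans_tendsto h0
  apply h2.congr'
  filter_upwards [eventually_ge_atTop (0:ℝ)] with x hx
  rw [Real.rpow_natCast, _root_.abs_of_nonneg hx,
    show (-(1/2:ℝ) * x^2) = -x^2/2 by ring]

lemma Fn_rec (n : ℕ) (l : ℝ) :
    Complex.I * l * Fn n l =
      n * Fn (n - 1) l - Fn (n + 1) l + (if n = 0 then 1 else 0) := by
  set E : ℝ → ℂ := fun x => Complex.exp (-(x:ℂ)^2/2 - Complex.I * l * x) with hE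
  have hderiv : ∀ x : ℝ, HasDerivAt (fun y : ℝ => (y:ℂ)^n * E y)
      ((n:ℂ) * (x:ℂ)^(n-1) * E x + (x:ℂ)^n * ((-(x:ℂ) - Complex.I * l) * E x)) x := by
    intro x
    have hp : HasDerivAt (fun z : ℂ => z^n) ((n:ℂ) * (x:ℂ)^(n-1)) (x:ℂ) := hasDerivAt_pow n _
    have ha : HasDerivAt (fun z : ℂ => -z^2/2 - Complex.I * l * z)
        (-(x:ℂ) - Complex.I * l) (x:ℂ) := by
      have h : HasDerivAt (fun z : ℂ => -z^2/2 - Complex.I * l * z)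
          (-(((2:ℕ):ℂ) * (x:ℂ)^1) / 2 - Complex.I * l * 1) (x:ℂ) :=
        (((hasDerivAt_pow 2 (x:ℂ)).neg).div_const 2).sub
        ((hasDerivAt_id (x:ℂ)).const_mul (Complex.I * (l:ℂ)))
      exact h.congr_deriv (by push_cast; ring)
    have he : HasDerivAt (fun z : ℂ => Complex.exp (-z^2/2 - Complex.I * l * z))
        ((-(x:ℂ) - Complex.I * l) * E x) (x:ℂ) := by
      simpa [hE, mul_comm] using ha.cexp
    exact (hp.mul he).comp_ofReal
  have htend : Tendsto (fun y : ℝ => (y:ℂ)^n * E y) atTop (𝓝 0) := by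
    exact squeeze_zero_norm (fun x => (norm_fgen n l x).le) (tendsto_bound_zero n)
  have hint : IntegrableOn (fun x : ℝ =>
      (n:ℂ) * (x:ℂ)^(n-1) * E x + (x:ℂ)^n * ((-(x:ℂ) - Complex.I * l) * E x))
      (Set.Ioi 0) := by
    have h1 : IntegrableOn (fun x : ℝ => (n:ℂ) * ((x:ℂ)^(n-1) * E x)) (Set.Ioi 0) :=
      (integrableFn (n-1) l).const_mul _
    have h2 : IntegrableOn (fun x : ℝ => (x:ℂ)^(n+1) * E x) (Set.Ioi 0) := integrableFn (n+1) l
    have h3 : IntegrableOn (fun x : ℝ => (Complex.I * l) * ((x:ℂ)^n * E x)) (Set.Ioi 0) :=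
      (integrableFn n l).const_mul _
    have h23 : IntegrableOn (fun x : ℝ =>
        (x:ℂ)^(n+1) * E x + (Complex.I * l) * ((x:ℂ)^n * E x)) (Set.Ioi 0) := h2.add h3
    have h123 : IntegrableOn (fun x : ℝ => (n:ℂ) * ((x:ℂ)^(n-1) * E x)
        - ((x:ℂ)^(n+1) * E x + (Complex.I * l) * ((x:ℂ)^n * E x))) (Set.Ioi 0) := h1.sub h23
    exact h123.congr_fun (fun x _ => by ring) measurableSet_Ioi
  have key := integral_Ioi_of_hasDerivAt_of_tendsto
    ((hderiv 0).continuousAt.continuousWithinAt) (fun x _ => hderiv x) hint htend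
  have hsplit : (∫ x in Set.Ioi (0:ℝ),
      ((n:ℂ) * (x:ℂ)^(n-1) * E x + (x:ℂ)^n * ((-(x:ℂ) - Complex.I * l) * E x)))
      = (n:ℂ) * Fn (n-1) l - Fn (n+1) l - Complex.I * l * Fn n l := by
    have h1 : IntegrableOn (fun x : ℝ => (n:ℂ) * ((x:ℂ)^(n-1) * E x)) (Set.Ioi 0) :=
      (integrableFn (n-1) l).const_mul _
    have h2 : IntegrableOn (fun x : ℝ => (x:ℂ)^(n+1) * E x) (Set.Ioi 0) := integrableFn (n+1) l
    have h3 : IntegrableOn (fun x : ℝ => (Complex.I * l) * ((x:ℂ)^n * E x)) (Set.Ioi 0) :=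
      (integrableFn n l).const_mul _
    rw [setIntegral_congr_fun measurableSet_Ioi
      (g := fun x : ℝ => (n:ℂ) * ((x:ℂ)^(n-1) * E x)
        - (((x:ℂ)^(n+1) * E x) + (Complex.I * l) * ((x:ℂ)^n * E x))) (fun x _ => by ring)]
    have h23 : IntegrableOn (fun x : ℝ =>
        (x:ℂ)^(n+1) * E x + (Complex.I * l) * ((x:ℂ)^n * E x)) (Set.Ioi 0) := h2.add h3
    rw [integral_sub h1 h23, integral_add h2 h3, integral_const_mul, integral_const_mul]
    unfold Fn
    simp only [hE]
    ring
  rw [hsplit] at key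
  have hf0 : ((0:ℝ):ℂ)^n * E 0 = (if n = 0 then 1 else 0) := by
    rcases n with _ | m
    · simp [hE]
    · simp [hE]
  rw [hf0] at key
  linear_combination -key

lemma Fn_step (n : ℕ) (hn : n ≠ 0) (m : ℕ) (l : ℝ) :
    (l:ℂ)^(m+1) * Fn n l =
      -Complex.I * ((n:ℂ) * ((l:ℂ)^m * Fn (n-1) l) - (l:ℂ)^m * Fn (n+1) l) := by
  have h := Fn_rec n l
  rw [if_neg hn] at h
  have hI : Complex.I * Complex.I = -1 := Complex.I_mul_I
  linear_combination (-Complex.I * (l:ℂ)^m) * h + ((l:ℂ)^(m+1) * Fn n l) * hI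

lemma lemA : ∀ m n : ℕ, m ≤ n →
    Tendsto (fun l : ℝ => (l:ℂ)^m * Fn n l) (cocompact ℝ) (𝓝 0) := by
  intro m
  induction m with
  | zero =>
    intro n _
    simpa using Fn_tendsto_zero n
  | succ m ih =>
    intro n hmn
    have hn : n ≠ 0 := by omega
    have h1 := ih (n-1) (by omega)
    have h2 := ih (n+1) (by omega)
    have := (((h1.const_mul ((n:ℂ))).sub h2).const_mul (-Complex.I))
    simp only [mul_zero, sub_zero] at this
    refine Tendsto.congr (fun l => ?_) this
    exact (Fn_step n hn m l).symm

lemma lemB : ∀ n : ℕ, Tendsto (fun l : ℝ => (l:ℂ)^(n+1) * Fn n l) (cocompact ℝ)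
    (𝓝 ((-Complex.I)^(n+1) * (n.factorial : ℂ))) := by
  intro n
  induction n with
  | zero =>
    have h := Fn_tendsto_zero 1
    have h2 := (h.const_mul Complex.I).const_add (-Complex.I)
    simp only [mul_zero, add_zero] at h2
    have heq : ∀ l : ℝ, (l:ℂ)^(0+1) * Fn 0 l = -Complex.I + Complex.I * Fn 1 l := by
      intro l
      have hr := Fn_rec 0 l
      rw [if_pos rfl] at hr
      norm_num at hr
      have hI : Complex.I * Complex.I = -1 := Complex.I_mul_I
      linear_combination (-Complex.I) * hr + ((l:ℂ)^(0+1) * Fn 0 l) * hI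
    have := Tendsto.congr (fun l => (heq l).symm) h2
    simpa using this
  | succ n ih =>
    have hA := lemA (n+1) (n+1+1) (by omega)
    have h1 := (ih.const_mul ((n:ℂ)+1)).sub hA
    have h2 := h1.const_mul (-Complex.I)
    simp only [sub_zero] at h2
    have hv : -Complex.I * (((n:ℂ)+1) * ((-Complex.I)^(n+1) * (n.factorial:ℂ)))
        = (-Complex.I)^(n+1+1) * (((n+1).factorial : ℕ):ℂ) := by
      rw [Nat.factorial_succ]
      push_cast
      ring
    rw [← hv]
    refine Tendsto.congr (fun l => ?_) h2
    have hs := Fn_step (n+1) (by omega) (n+1) l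
    simp only [Nat.add_sub_cancel] at hs
    push_cast at hs ⊢
    linear_combination -hs

lemma pd_abs (c : ℕ) (hc : c ≠ 0) (u : ℝ) :
    ‖parabolicD' (c:ℝ) (Complex.I * u)‖ =
      Real.exp (u^2/4) / Real.Gamma c * ‖Fn (c-1) u‖ := by
  unfold parabolicD'
  rw [if_neg (by exact_mod_cast hc)]
  have hint : (∫ x in Set.Ioi (0:ℝ),
      Complex.exp (-(Complex.I * u) * x - (x:ℂ)^2/2) * ((x ^ ((c:ℝ)-1) : ℝ):ℂ))
      = Fn (c-1) u := by
    unfold Fn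
    refine setIntegral_congr_fun measurableSet_Ioi (fun x hx => ?_)
    have h1 : (x:ℝ) ^ ((c:ℝ)-1) = x ^ (c-1 : ℕ) := by
      rw [show ((c:ℝ)-1) = ((c-1 : ℕ):ℝ) by
        push_cast [Nat.cast_sub (Nat.one_le_iff_ne_zero.2 hc)]; ring, Real.rpow_natCast]
    rw [h1]
    push_cast
    rw [mul_comm]
    congr 1
    ring
  rw [hint]
  have harg : -(Complex.I * (u:ℂ))^2/4 = ((u^2/4 : ℝ) : ℂ) := by
    rw [mul_pow, Complex.I_sq]
    push_cast
    ring
  rw [harg, norm_mul, norm_div, Complex.norm_exp, Complex.ofReal_re, Complex.norm_real,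
    Real.norm_eq_abs,
    _root_.abs_of_pos (Real.Gamma_pos_of_pos (by exact_mod_cast Nat.pos_of_ne_zero hc))]

lemma norm_sq_split (c : ℕ) (u : ℝ) (w : ℂ) :
    ‖(u:ℂ)^c * w‖^2 = u^(2*c) * ‖w‖^2 := by
  rw [norm_mul, norm_pow, Complex.norm_real, Real.norm_eq_abs, mul_pow, ← pow_mul,
    mul_comm c 2, pow_mul, _root_.sq_abs, ← pow_mul]

lemma ratio_eq (c : ℕ) (hc : c ≠ 0) (u : ℝ) :
    awkDensity' (c:ℝ) u / (u^(2*c) * Real.exp (-u^2/2))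
      = (Real.Gamma c)^2 / (Real.sqrt (2*Real.pi) * (c.factorial:ℝ))
          / ‖(u:ℂ)^c * Fn (c-1) u‖^2 := by
  rw [norm_sq_split]
  unfold awkDensity'
  rw [pd_abs c hc u]
  have hG1 : Real.Gamma (1 + (c:ℝ)) = (c.factorial : ℝ) := by
    rw [add_comm]
    exact Real.Gamma_nat_eq_factorial c
  rw [hG1]
  by_cases hN : ‖Fn (c-1) u‖ = 0
  · rw [hN]
    simp
  by_cases hu : u = 0
  · rw [hu]
    rw [zero_pow (by omega : 2*c ≠ 0)]
    simp
  rw [show -u^2/2 = -(u^2/4 + u^2/4) by ring, Real.exp_neg, Real.exp_add, mul_inv]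
  have he : Real.exp (u^2/4) ≠ 0 := Real.exp_ne_zero _
  have hS : Real.sqrt (2*Real.pi) ≠ 0 := by positivity
  have hΓ : Real.Gamma c ≠ 0 :=
    (Real.Gamma_pos_of_pos (by exact_mod_cast Nat.pos_of_ne_zero hc : (0:ℝ) < c)).ne'
  have hfac : (c.factorial : ℝ) ≠ 0 := by positivity
  field_simp

/-- for every integer `c ≥ 0`, there is `K_c > 0` with
`ρ_c(u) / (u^{2c}·e^{-u²/2}) → K_c` as `|u| → ∞`. -/
theorem stmt_17 (c : ℕ) :
    ∃ K : ℝ, 0 < K ∧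
      Tendsto (fun u : ℝ => awkDensity' (c : ℝ) u / (u ^ (2 * c) * Real.exp (-u ^ 2 / 2)))
        (Filter.atTop ⊔ Filter.atBot) (nhds K) := by
  have hfil : (atTop ⊔ atBot : Filter ℝ) = cocompact ℝ := by
    rw [cocompact_eq_atBot_atTop, sup_comm]
  rcases Nat.eq_zero_or_pos c with hc | hc
  · subst hc
    refine ⟨1 / Real.sqrt (2*Real.pi), by positivity, ?_⟩
    have hconst : ∀ u : ℝ,
        awkDensity' ((0:ℕ):ℝ) u / (u ^ (2*0) * Real.exp (-u^2/2))
          = 1 / Real.sqrt (2*Real.pi) := by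
      intro u
      unfold awkDensity' parabolicD'
      rw [if_pos (by norm_num)]
      have harg : -(Complex.I * (u:ℂ))^2/4 = ((u^2/4 : ℝ) : ℂ) := by
        rw [mul_pow, Complex.I_sq]
        push_cast
        ring
      rw [harg, Complex.norm_exp, Complex.ofReal_re]
      have hG1 : Real.Gamma (1 + ((0:ℕ):ℝ)) = 1 := by
        norm_num [Real.Gamma_one]
      rw [hG1]
      rw [show -u^2/2 = -(u^2/4 + u^2/4) by ring, Real.exp_neg, Real.exp_add, mul_inv]
      have he : Real.exp (u^2/4) ≠ 0 := Real.exp_ne_zero _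
      have hS : Real.sqrt (2*Real.pi) ≠ 0 := by positivity
      field_simp
      ring
    rw [show (fun u : ℝ => awkDensity' ((0:ℕ):ℝ) u / (u ^ (2*0) * Real.exp (-u^2/2)))
      = fun _ : ℝ => 1 / Real.sqrt (2*Real.pi) from funext hconst]
    exact tendsto_const_nhds
  · have hc' : c ≠ 0 := by omega
    set k := c - 1 with hk
    have hck : k + 1 = c := by omega
    have hB := lemB k
    rw [hck] at hB
    have hnorm : Tendsto (fun u : ℝ => ‖(u:ℂ)^c * Fn k u‖^2) (cocompact ℝ)
        (𝓝 (((k.factorial:ℝ))^2)) := by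
      have h1 := hB.norm
      have h2 : ‖(-Complex.I)^(k+1) * ((k.factorial:ℕ):ℂ)‖ = (k.factorial:ℝ) := by
        rw [norm_mul, norm_pow, norm_neg, Complex.norm_I, one_pow, one_mul]
        simp
      rw [hck] at h2
      rw [h2] at h1
      exact h1.pow 2
    have hfacne : ((k.factorial:ℝ))^2 ≠ 0 := by positivity
    refine ⟨(Real.Gamma c)^2 / (Real.sqrt (2*Real.pi) * (c.factorial:ℝ)) / ((k.factorial:ℝ))^2,
      ?_, ?_⟩
    · have hΓ : 0 < Real.Gamma c :=
        Real.Gamma_pos_of_pos (by exact_mod_cast Nat.pos_of_ne_zero hc')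
      have h1 : 0 < (c.factorial : ℝ) := by positivity
      have h2 : 0 < Real.sqrt (2*Real.pi) := by positivity
      positivity
    · rw [hfil]
      have ht := Tendsto.div
        (tendsto_const_nhds (x := (Real.Gamma c)^2 / (Real.sqrt (2*Real.pi) * (c.factorial:ℝ)))
          (f := cocompact ℝ)) hnorm hfacne
      refine ht.congr (fun u => ?_)
      simp only [Pi.div_apply]
      rw [ratio_eq c hc' u, hk]
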